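/- Let φ: [M₀, ∞) → ℝ≥0 be a C² function with φ'(x) > 0 on [M₀, ∞) and such that sup_{x ≥ M₀} |φ''(x)/(φ'(x))³| ≤ C for some constant C. Then for all M ≥ M₀, ∫_M^∞ e^{-φ(t)} dt ≤ e^{-φ(M)}/φ'(M) + C·e^{-φ(M)}. -/

import Mathlib

open MeasureTheory Real Set intervalIntegral Filter

/-- quantitative tail bound for `∫_M^∞ e^{-φ}` under a bound on `φ''/(φ')³`. -/
theorem integral_exp_neg_tail_bound
    (M₀ C : ℝ) (φ φ' φ'' : ℝ → ℝ)
    (hφ0 : ∀ x ∈ Set.Ici M₀, 0 ≤ φ x)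
    (hd1 : ∀ x ∈ Set.Ici M₀, HasDerivAt φ (φ' x) x)
    (hd2 : ∀ x ∈ Set.Ici M₀, HasDerivAt φ' (φ'' x) x)
    (hc2 : ContinuousOn φ'' (Set.Ici M₀))
    (hpos : ∀ x ∈ Set.Ici M₀, 0 < φ' x)
    (hbound : ∀ x ∈ Set.Ici M₀, |φ'' x / (φ' x) ^ 3| ≤ C) :
    ∀ M ≥ M₀,
      ∫ t in Set.Ioi M, Real.exp (-φ t) ≤
        Real.exp (-φ M) / φ' M + C * Real.exp (-φ M) := by
  intro M hM
  have hC : 0 ≤ C := le_trans (abs_nonneg _) (hbound M₀ Set.self_mem_Ici)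
  have hφc : ContinuousOn φ (Ici M₀) :=
    fun x hx => (hd1 x hx).continuousAt.continuousWithinAt
  have hφ'c : ContinuousOn φ' (Ici M₀) :=
    fun x hx => (hd2 x hx).continuousAt.continuousWithinAt
  have hec : ContinuousOn (fun t => Real.exp (-φ t)) (Ici M₀) :=
    (Real.continuous_exp.comp_continuousOn (hφc.neg))
  set B := Real.exp (-φ M) / φ' M + C * Real.exp (-φ M) with hBdef
  -- finite interval bound
  have key : ∀ N, M ≤ N → ∫ x in M..N, Real.exp (-φ x) ≤ B := by
    intro N hMN
    have hsub : Icc M N ⊆ Ici M₀ := fun x hx => le_trans hM hx.1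
    have huIcc : uIcc M N = Icc M N := uIcc_of_le hMN
    -- continuity facts on Icc M N
    have hφc' := hφc.mono hsub
    have hφ'c' := hφ'c.mono hsub
    have hφ''c' := hc2.mono hsub
    have hec' := hec.mono hsub
    have hne : ∀ x ∈ Icc M N, φ' x ≠ 0 := fun x hx => (hpos x (hsub hx)).ne'
    -- the function r = e^{-φ} φ'' / (φ')^2
    set r : ℝ → ℝ := fun x => Real.exp (-φ x) * φ'' x / (φ' x) ^ 2 with hrdef
    have hrc : ContinuousOn r (Icc M N) :=
      ((hec'.mul hφ''c').div (hφ'c'.pow 2)) (fun x hx => pow_ne_zero 2 (hne x hx))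
    -- h = e^{-φ} + r is the derivative of -(e^{-φ}/φ')
    have hF : ∀ x ∈ Icc M N,
        HasDerivAt (fun y => -(Real.exp (-φ y) / φ' y)) (Real.exp (-φ x) + r x) x := by
      intro x hx
      have hx' : x ∈ Ici M₀ := hsub hx
      have hexp : HasDerivAt (fun y => Real.exp (-φ y)) (Real.exp (-φ x) * (-φ' x)) x :=
        ((hd1 x hx').neg).exp
      have := (hexp.div (hd2 x hx') (hne x hx)).neg
      refine this.congr_deriv ?_
      have h1 : φ' x ≠ 0 := hne x hx
      simp only [hrdef]
      field_simp
      ring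
    have hG : ∀ x ∈ Icc M N,
        HasDerivAt (fun y => -Real.exp (-φ y)) (φ' x * Real.exp (-φ x)) x := by
      intro x hx
      have hx' : x ∈ Ici M₀ := hsub hx
      have hexp : HasDerivAt (fun y => Real.exp (-φ y)) (Real.exp (-φ x) * (-φ' x)) x :=
        ((hd1 x hx').neg).exp
      refine hexp.neg.congr_deriv ?_
      ring
    -- interval integrabilities
    have hie : IntervalIntegrable (fun x => Real.exp (-φ x)) volume M N :=
      (hec'.mono (by rw [huIcc])).intervalIntegrable
    have hir : IntervalIntegrable r volume M N :=
      (hrc.mono (by rw [huIcc])).intervalIntegrable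
    have hih : IntervalIntegrable (fun x => Real.exp (-φ x) + r x) volume M N := hie.add hir
    have hig : IntervalIntegrable (fun x => φ' x * Real.exp (-φ x)) volume M N :=
      ((hφ'c'.mul hec').mono (by rw [huIcc])).intervalIntegrable
    -- FTC computations
    have ftcF : ∫ x in M..N, (Real.exp (-φ x) + r x) =
        Real.exp (-φ M) / φ' M - Real.exp (-φ N) / φ' N := by
      have := intervalIntegral.integral_eq_sub_of_hasDerivAt
        (f := fun y => -(Real.exp (-φ y) / φ' y)) (fun x hx => hF x (huIcc ▸ hx)) hih
      rw [this]; ring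
    have ftcG : ∫ x in M..N, φ' x * Real.exp (-φ x) =
        Real.exp (-φ M) - Real.exp (-φ N) := by
      have := intervalIntegral.integral_eq_sub_of_hasDerivAt
        (f := fun y => -Real.exp (-φ y)) (fun x hx => hG x (huIcc ▸ hx)) hig
      rw [this]; ring
    -- split the integral
    have hsplit : ∫ x in M..N, (Real.exp (-φ x) + r x) =
        (∫ x in M..N, Real.exp (-φ x)) + ∫ x in M..N, r x :=
      intervalIntegral.integral_add hie hir
    -- bound -∫ r ≤ ∫ C φ' e^{-φ}
    have hptw : ∀ x ∈ Icc M N, -(C * (φ' x * Real.exp (-φ x))) ≤ r x := by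
      intro x hx
      have hx' : x ∈ Ici M₀ := hsub hx
      have hp := hpos x hx'
      have hb := hbound x hx'
      have habs : |φ'' x| ≤ C * (φ' x) ^ 3 := by
        rw [abs_div, abs_of_pos (pow_pos hp 3)] at hb
        calc |φ'' x| = |φ'' x| / (φ' x)^3 * (φ' x)^3 := by
              field_simp
          _ ≤ C * (φ' x)^3 := by
              apply mul_le_mul_of_nonneg_right hb (le_of_lt (pow_pos hp 3))
      have h2 : -(C * (φ' x)^3) ≤ φ'' x := by
        have := neg_abs_le (φ'' x); linarith
      have he : (0:ℝ) < Real.exp (-φ x) := Real.exp_pos _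
      have : -(C * (φ' x)^3) * (Real.exp (-φ x) / (φ' x)^2) ≤
          φ'' x * (Real.exp (-φ x) / (φ' x)^2) :=
        mul_le_mul_of_nonneg_right h2 (by positivity)
      calc -(C * (φ' x * Real.exp (-φ x)))
          = -(C * (φ' x)^3) * (Real.exp (-φ x) / (φ' x)^2) := by
            field_simp
        _ ≤ φ'' x * (Real.exp (-φ x) / (φ' x)^2) := this
        _ = r x := by rw [hrdef]; ring
    have hinegc : IntervalIntegrable (fun x => -(C * (φ' x * Real.exp (-φ x)))) volume M N :=
      (((continuousOn_const.mul (hφ'c'.mul hec')).neg).mono (by rw [huIcc])).intervalIntegrable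
    have hmono : ∫ x in M..N, -(C * (φ' x * Real.exp (-φ x))) ≤ ∫ x in M..N, r x := by
      apply intervalIntegral.integral_mono_on hMN hinegc hir
      intro x hx; exact hptw x hx
    have hCint : ∫ x in M..N, -(C * (φ' x * Real.exp (-φ x))) =
        -(C * (Real.exp (-φ M) - Real.exp (-φ N))) := by
      rw [intervalIntegral.integral_neg]
      congr 1
      rw [intervalIntegral.integral_const_mul, ftcG]
    -- combine
    have hFN : 0 ≤ Real.exp (-φ N) / φ' N := by
      have := hpos N (le_trans hM hMN)
      positivity
    have hGN : 0 ≤ Real.exp (-φ N) := (Real.exp_pos _).le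
    have hmain : ∫ x in M..N, Real.exp (-φ x) =
        (Real.exp (-φ M) / φ' M - Real.exp (-φ N) / φ' N) - ∫ x in M..N, r x := by
      rw [ftcF] at hsplit; linarith
    rw [hmain]
    have h3 : -∫ x in M..N, r x ≤ C * (Real.exp (-φ M) - Real.exp (-φ N)) := by
      rw [hCint] at hmono; linarith
    have h4 : C * (Real.exp (-φ M) - Real.exp (-φ N)) ≤ C * Real.exp (-φ M) := by
      nlinarith
    rw [hBdef]; linarith
  -- integrability on Ioi M
  have hint : IntegrableOn (fun t => Real.exp (-φ t)) (Ioi M) := by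
    refine MeasureTheory.integrableOn_Ioi_of_intervalIntegral_norm_bounded
      (b := fun i : ℝ => i) B M ?_ tendsto_id ?_
    · intro i
      rcases le_or_gt i M with h | h
      · rw [Set.Ioc_eq_empty (by simpa using h.not_gt)]
        exact integrableOn_empty
      · have hsub : Icc M i ⊆ Ici M₀ := fun x hx => le_trans hM hx.1
        exact ((hec.mono hsub).integrableOn_Icc).mono_set Ioc_subset_Icc_self
    · filter_upwards [eventually_ge_atTop M] with i hi
      have : (fun x => ‖Real.exp (-φ x)‖) = fun x => Real.exp (-φ x) := by
        funext x; rw [Real.norm_eq_abs, abs_of_pos (Real.exp_pos _)]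
      rw [this]
      exact key i hi
  -- pass to the limit
  have htend := intervalIntegral_tendsto_integral_Ioi M hint tendsto_id
  refine le_of_tendsto htend ?_
  filter_upwards [eventually_ge_atTop M] with i hi
  exact key i hi
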